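/- Let l ≥ 2 and let c̃, α, α₃, …, α_l be real numbers. Let W̃₂ be the l×l quaternion matrix c̃·E₁₂ + α(iG₁ + iG₂) + Σ_{q=3}^{l} α_q·iG_q, where E₁₂ has 1 in entry (1,2), −1 in entry (2,1), zeros elsewhere, and G_q has √2 in entry (q,q) and zeros elsewhere. Then the characteristic polynomial of the 2l×2l complex matrix dπ(W̃₂) equals (λ⁴ + 2(c̃² + 2α²)λ² + (c̃² − 2α²)²)·∏_{q=3}^{l}(λ² + 2α_q²). -/

import Mathlib

set_option maxHeartbeats 1000000


open Quaternion Matrix Polynomial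

/-- The quaternion unit `i`. -/
noncomputable def qi : ℍ[ℝ] := ⟨0, 1, 0, 0⟩
/-- The quaternion unit `j`. -/
noncomputable def qj : ℍ[ℝ] := ⟨0, 0, 1, 0⟩

/-- `G_q`: the `l × l` quaternion matrix with `√2` in entry `(q,q)` and zeros elsewhere. -/
noncomputable def Gmat (l : ℕ) (q : Fin l) : Matrix (Fin l) (Fin l) ℍ[ℝ] :=
  Matrix.single q q (((Real.sqrt 2 : ℝ) : ℍ[ℝ]))

/-- `E₁₂`: the `l × l` quaternion matrix with `1` in entry `(1,2)`, `−1` in entry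
`(2,1)` and zeros elsewhere. -/
noncomputable def Emat (l : ℕ) [NeZero l] (i j : Fin l) : Matrix (Fin l) (Fin l) ℍ[ℝ] :=
  Matrix.single i j 1 - Matrix.single j i 1

/-- The complex matrix `X` in the unique decomposition `W = X + jY` of a quaternion
matrix `W` (identifying `ℂ` with the real span of `1` and `i` in `ℍ`). -/
noncomputable def quatX (l : ℕ) (W : Matrix (Fin l) (Fin l) ℍ[ℝ]) :
    Matrix (Fin l) (Fin l) ℂ :=
  fun p q => ⟨(W p q).re, (W p q).imI⟩

/-- The complex matrix `Y` in the unique decomposition `W = X + jY` of a quaternion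
matrix `W`. -/
noncomputable def quatY (l : ℕ) (W : Matrix (Fin l) (Fin l) ℍ[ℝ]) :
    Matrix (Fin l) (Fin l) ℂ :=
  fun p q => ⟨(W p q).imJ, -(W p q).imK⟩

/-- The embedding `dπ : M_l(ℍ) → M_{2l}(ℂ)`, `W = X + jY ↦ [[X, −conj Y], [Y, conj X]]`. -/
noncomputable def dpi (l : ℕ) (W : Matrix (Fin l) (Fin l) ℍ[ℝ]) :
    Matrix (Fin l ⊕ Fin l) (Fin l ⊕ Fin l) ℂ :=
  Matrix.fromBlocks (quatX l W) (-(quatY l W).map (starRingEnd ℂ))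
    (quatY l W) ((quatX l W).map (starRingEnd ℂ))

theorem entryW (m : ℕ) (ct a : ℝ) (α : Fin (m + 2) → ℝ)
    (W : Matrix (Fin (m + 2)) (Fin (m + 2)) ℍ[ℝ])
    (hW : W = ct • Emat (m + 2) 0 1 + a • (qi • Gmat (m + 2) 0 + qi • Gmat (m + 2) 1) +
      ∑ q ∈ Finset.univ \ {0, 1}, α q • (qi • Gmat (m + 2) q)) (p q : Fin (m+2)) :
    W p q = ⟨(if p = 0 ∧ q = 1 then ct else if p = 1 ∧ q = 0 then -ct else 0),
      (if p = q then (if p = 0 ∨ p = 1 then a else α p) * Real.sqrt 2 else 0), 0, 0⟩ := by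
  subst hW
  simp only [Matrix.add_apply, Matrix.smul_apply, Matrix.sum_apply, Emat, Gmat,
    Matrix.sub_apply, Matrix.single, Matrix.of_apply, smul_ite, smul_zero]
  have hsum : (∑ x ∈ Finset.univ \ ({0, 1} : Finset (Fin (m+2))),
      if x = p ∧ x = q then α x • qi • ((Real.sqrt 2 : ℝ):ℍ[ℝ]) else 0)
      = if p = q ∧ p ≠ 0 ∧ p ≠ 1 then α p • qi • ((Real.sqrt 2 : ℝ):ℍ[ℝ]) else 0 := by
    split_ifs with h
    · rw [Finset.sum_eq_single_of_mem p (by simp [h.2.1, h.2.2])]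
      · simp [h.1]
      · intro x _ hxp; rw [if_neg]; rintro ⟨rfl, -⟩; exact hxp rfl
    · apply Finset.sum_eq_zero; intro x hx
      simp only [Finset.mem_sdiff, Finset.mem_insert, Finset.mem_singleton] at hx
      rw [if_neg]; rintro ⟨rfl, rfl⟩
      exact h ⟨rfl, fun h0 => hx.2 (Or.inl h0), fun h1 => hx.2 (Or.inr h1)⟩
  rw [hsum]; clear hsum
  have hqs : qi • (((Real.sqrt 2:ℝ)):ℍ[ℝ]) = Real.sqrt 2 • qi := by
    rw [smul_eq_mul, Quaternion.mul_coe_eq_smul]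
  rw [hqs]; clear hqs
  simp only [show ∀ x : Fin (m+2), ((0:Fin (m+2)) = x) = (x = 0) from fun x => propext eq_comm,
    show ∀ x : Fin (m+2), ((1:Fin (m+2)) = x) = (x = 1) from fun x => propext eq_comm]
  have h01 : ¬((0:Fin (m+2)) = 1) := by simp [Fin.ext_iff]
  have h10 : ¬((1:Fin (m+2)) = 0) := by simp [Fin.ext_iff]
  by_cases hp0 : p = 0 <;> by_cases hp1 : p = 1 <;> by_cases hq0 : q = 0 <;>
    by_cases hq1 : q = 1 <;> by_cases hpq : p = q <;>
    ext <;> simp_all [show qi.re = 0 from rfl, show qi.imI = 1 from rfl, show qi.imJ = 0 from rfl,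
      show qi.imK = 0 from rfl]


/-- the complex matrix X of W -/
noncomputable def Mc (m : ℕ) (ct a : ℝ) (α : Fin (m + 2) → ℝ) :
    Matrix (Fin (m + 2)) (Fin (m + 2)) ℂ := fun p q =>
  ⟨(if p = 0 ∧ q = 1 then ct else if p = 1 ∧ q = 0 then -ct else 0),
    (if p = q then (if p = 0 ∨ p = 1 then a else α p) * Real.sqrt 2 else 0)⟩

def eqv (m : ℕ) : Fin 2 ⊕ Fin m ≃ Fin (m + 2) :=
  finSumFinEquiv.trans (finCongr (by omega))

noncomputable def Bc (ct a : ℝ) : Matrix (Fin 2) (Fin 2) ℂ :=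
  !![⟨0, a * Real.sqrt 2⟩, (ct : ℂ); (-ct : ℂ), ⟨0, a * Real.sqrt 2⟩]

lemma eqv_inl_zero (m : ℕ) : eqv m (Sum.inl 0) = 0 := by
  simp [eqv, finSumFinEquiv, Fin.ext_iff]

lemma eqv_inl_one (m : ℕ) : eqv m (Sum.inl 1) = 1 := by
  simp [eqv, finSumFinEquiv, Fin.ext_iff]

lemma eqv_inr_val (m : ℕ) (i : Fin m) : (eqv m (Sum.inr i)).val = 2 + i.val := by
  simp [eqv, finSumFinEquiv]; omega

lemma Mc_block (m : ℕ) (ct a : ℝ) (α : Fin (m + 2) → ℝ) :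
    (Mc m ct a α).submatrix (eqv m) (eqv m) =
      Matrix.fromBlocks (Bc ct a) 0 0
        (Matrix.diagonal fun i : Fin m => (⟨0, α (eqv m (Sum.inr i)) * Real.sqrt 2⟩ : ℂ)) := by
  have h2 : ∀ i : Fin m, eqv m (Sum.inr i) ≠ 0 := by
    intro i hh
    have := eqv_inr_val m i; rw [hh] at this; simp [Fin.ext_iff] at this; omega
  have h3 : ∀ i : Fin m, eqv m (Sum.inr i) ≠ 1 := by
    intro i hh
    have := eqv_inr_val m i; rw [hh] at this; simp [Fin.ext_iff] at this; omega
  have hinj : ∀ i j : Fin m, (eqv m (Sum.inr i) = eqv m (Sum.inr j)) ↔ i = j := by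
    intro i j
    constructor
    · intro hh
      have := congrArg Fin.val hh
      rw [eqv_inr_val, eqv_inr_val] at this
      exact Fin.ext (by omega)
    · rintro rfl; rfl
  have h01 : ((0 : Fin (m+2)) = 1) = False := by simp [Fin.ext_iff]
  have h10 : ((1 : Fin (m+2)) = 0) = False := by simp [Fin.ext_iff]
  ext s t
  rcases s with i | i <;> rcases t with j | j
  · fin_cases i <;> fin_cases j <;>
      simp [Mc, Bc, Matrix.submatrix_apply, eqv_inl_zero, eqv_inl_one, h01, h10,
        Complex.ext_iff]
  · fin_cases i <;>
      simp [Mc, Matrix.submatrix_apply, eqv_inl_zero, eqv_inl_one,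
        h2 j, h3 j, Ne.symm (h2 j), Ne.symm (h3 j), Complex.ext_iff]
  · fin_cases j <;>
      simp [Mc, Matrix.submatrix_apply, eqv_inl_zero, eqv_inl_one,
        h2 i, h3 i, Ne.symm (h2 i), Ne.symm (h3 i), Complex.ext_iff]
  · by_cases hij : i = j
    · subst hij
      simp [Mc, Matrix.submatrix_apply, h2 i, h3 i, Complex.ext_iff]
    · simp [Mc, Matrix.submatrix_apply, h2 i, h3 i, hinj i j, hij,
        Matrix.diagonal_apply_ne _ hij, Complex.ext_iff]

lemma charpoly_diag {n : ℕ} (d : Fin n → ℂ) :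
    (Matrix.diagonal d).charpoly = ∏ i, (X - C (d i)) := by
  rw [Matrix.charpoly]
  have : charmatrix (Matrix.diagonal d) = Matrix.diagonal fun i => (X : ℂ[X]) - C (d i) := by
    ext i j
    by_cases h : i = j
    · subst h; simp
    · simp [h, Matrix.diagonal_apply_ne _ h]
  rw [this, Matrix.det_diagonal]

lemma Bc_charpoly (ct a : ℝ) :
    (Bc ct a).charpoly = (X - C (⟨0, a * Real.sqrt 2⟩ : ℂ)) ^ 2 + C ((ct : ℂ)) ^ 2 := by
  rw [Matrix.charpoly, Matrix.det_fin_two]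
  simp only [charmatrix_apply_eq, charmatrix_apply_ne _ _ _ (by decide : (0:Fin 2) ≠ 1),
    charmatrix_apply_ne _ _ _ (by decide : (1:Fin 2) ≠ 0), Bc]
  norm_num [Matrix.cons_val_zero, Matrix.cons_val_one, Matrix.head_cons]
  ring

lemma prod_sdiff_eq (m : ℕ) (g : Fin (m + 2) → ℂ[X]) :
    ∏ q ∈ Finset.univ \ {0, 1}, g q = ∏ i : Fin m, g (eqv m (Sum.inr i)) := by
  rw [show (Finset.univ \ {0, 1} : Finset (Fin (m + 2))) =
      Finset.image (fun i : Fin m => eqv m (Sum.inr i)) Finset.univ from ?_]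
  · rw [Finset.prod_image]
    intro i _ j _ hij
    have := congrArg Fin.val hij
    rw [eqv_inr_val, eqv_inr_val] at this
    exact Fin.ext (by omega)
  · ext q
    simp only [Finset.mem_sdiff, Finset.mem_univ, true_and, Finset.mem_insert,
      Finset.mem_singleton, Finset.mem_image]
    constructor
    · rintro h
      have h0 : q.val ≠ 0 := fun hh => h (Or.inl (Fin.ext hh))
      have h1 : q.val ≠ 1 := fun hh => h (Or.inr (Fin.ext hh))
      refine ⟨⟨q.val - 2, by omega⟩, Fin.ext ?_⟩
      rw [eqv_inr_val]; simp; omega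
    · rintro ⟨i, rfl⟩
      have := eqv_inr_val m i
      push_neg
      constructor <;> (intro hh; rw [hh] at this; simp [Fin.ext_iff] at this) <;> omega

lemma mk_sq (t : ℝ) : ((⟨0, t⟩ : ℂ))^2 = ((-(t^2) : ℝ) : ℂ) := by
  apply Complex.ext <;>
    simp [pow_two, Complex.mul_re, Complex.mul_im]

lemma conj_mk (t : ℝ) : (starRingEnd ℂ) ((⟨0, t⟩ : ℂ)) = ((⟨0, -t⟩ : ℂ)) := by
  apply Complex.ext <;> simp

/-- Statement 15 (item 2) of Proposition `char` of the paper): the characteristic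
polynomial of `dπ(W̃₂)` for `W̃₂ = c̃·E₁₂ + α(iG₁ + iG₂) + Σ_{q=3}^{l} α_q·iG_q`.
Here `l = m + 2 ≥ 2` and the index `q = 1, …, l` of the paper corresponds to
`q : Fin (m + 2)`, the first index being `0`. -/
theorem stmt_15 (m : ℕ) (ct a : ℝ) (α : Fin (m + 2) → ℝ)
    (W : Matrix (Fin (m + 2)) (Fin (m + 2)) ℍ[ℝ])
    (hW : W = ct • Emat (m + 2) 0 1 + a • (qi • Gmat (m + 2) 0 + qi • Gmat (m + 2) 1) +
      ∑ q ∈ Finset.univ \ {0, 1}, α q • (qi • Gmat (m + 2) q)) :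
    (dpi (m + 2) W).charpoly =
      (X ^ 4 + C ((2 * (ct ^ 2 + 2 * a ^ 2) : ℝ) : ℂ) * X ^ 2 +
          C (((ct ^ 2 - 2 * a ^ 2) ^ 2 : ℝ) : ℂ)) *
        ∏ q ∈ Finset.univ \ {0, 1}, (X ^ 2 + C ((2 * (α q) ^ 2 : ℝ) : ℂ)) := by
  have hent := entryW m ct a α W hW
  have hX : quatX (m + 2) W = Mc m ct a α := by
    funext p q; simp [quatX, Mc, hent p q]
  have hY : quatY (m + 2) W = 0 := by
    funext p q; simp [quatY, hent p q]; rfl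
  have hdpi : dpi (m + 2) W =
      Matrix.fromBlocks (Mc m ct a α) 0 0 ((Mc m ct a α).map (starRingEnd ℂ)) := by
    rw [dpi, hX, hY]; simp
  rw [hdpi, Matrix.charpoly_fromBlocks_zero₂₁, Matrix.charpoly_map]
  have hMc : (Mc m ct a α).charpoly =
      ((X - C (⟨0, a * Real.sqrt 2⟩ : ℂ)) ^ 2 + C ((ct : ℂ)) ^ 2) *
        ∏ i : Fin m, (X - C (⟨0, α (eqv m (Sum.inr i)) * Real.sqrt 2⟩ : ℂ)) := by
    rw [← Matrix.charpoly_reindex (eqv m).symm, Matrix.reindex_apply]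
    simp only [Equiv.symm_symm]
    rw [Mc_block, Matrix.charpoly_fromBlocks_zero₂₁, Bc_charpoly, charpoly_diag]
  rw [hMc, prod_sdiff_eq]
  simp only [Polynomial.map_mul, Polynomial.map_add, Polynomial.map_pow, Polynomial.map_sub,
    Polynomial.map_X, Polynomial.map_C, Polynomial.map_prod, conj_mk, Complex.conj_ofReal]
  rw [mul_mul_mul_comm]
  congr 1
  · -- quartic part
    have hz2 : ((⟨0, a * Real.sqrt 2⟩ : ℂ))^2 = ((-(2 * a^2) : ℝ) : ℂ) := by
      rw [mk_sq]
      norm_num [mul_pow, Real.sq_sqrt]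
      ring_nf
    have e1 : C ((2 * (ct ^ 2 + 2 * a ^ 2) : ℝ) : ℂ)
        = 2 * (C ((ct:ℂ)))^2 - 2 * (C ((⟨0, a * Real.sqrt 2⟩ : ℂ)))^2 := by
      rw [← map_pow, ← map_pow, hz2, ← map_ofNat C 2, ← _root_.map_mul, ← _root_.map_mul, ← _root_.map_sub]
      congr 1
      push_cast
      ring
    have e0 : C (((ct ^ 2 - 2 * a ^ 2) ^ 2 : ℝ) : ℂ)
        = ((C ((⟨0, a * Real.sqrt 2⟩ : ℂ)))^2 + (C ((ct:ℂ)))^2)^2 := by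
      rw [← map_pow, ← map_pow, hz2, ← _root_.map_add, ← map_pow]
      congr 1
      push_cast
      ring
    rw [e1, e0]
    have : C ((⟨0, -(a * Real.sqrt 2)⟩:ℂ)) = - C ((⟨0, (a * Real.sqrt 2)⟩:ℂ)) := by
      rw [← map_neg]; congr 1; apply Complex.ext <;> simp
    rw [this]
    ring
  · -- diagonal part
    rw [← Finset.prod_mul_distrib]
    apply Finset.prod_congr rfl
    intro i _
    have hd2 : ((⟨0, α (eqv m (Sum.inr i)) * Real.sqrt 2⟩ : ℂ))^2
        = ((-(2 * (α (eqv m (Sum.inr i)))^2) : ℝ) : ℂ) := by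
      rw [mk_sq]
      norm_num [mul_pow, Real.sq_sqrt]
      ring_nf
    have : C ((⟨0, -(α (eqv m (Sum.inr i)) * Real.sqrt 2)⟩:ℂ))
        = - C ((⟨0, (α (eqv m (Sum.inr i)) * Real.sqrt 2)⟩:ℂ)) := by
      rw [← map_neg]; congr 1; apply Complex.ext <;> simp
    rw [this]
    have expand : (X - C ((⟨0, α (eqv m (Sum.inr i)) * Real.sqrt 2⟩ : ℂ))) *
        (X - -C ((⟨0, α (eqv m (Sum.inr i)) * Real.sqrt 2⟩ : ℂ)))
        = X^2 - (C ((⟨0, α (eqv m (Sum.inr i)) * Real.sqrt 2⟩ : ℂ)))^2 := by ring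
    rw [expand, ← map_pow, hd2]
    rw [show ((-(2 * (α (eqv m (Sum.inr i)))^2) : ℝ) : ℂ)
      = -((2 * (α (eqv m (Sum.inr i)))^2 : ℝ) : ℂ) by push_cast; ring]
    rw [map_neg]
    ring
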